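/- Let (Ω, ℱ, P) be a probability space, t and d integers with t ≥ d + 1 and d ≥ 1, and X : Ω → ℝ a random variable with 0 ≤ X ≤ 1 almost surely. Assume that for every ε ∈ (0,1), P(X > ε) ≥ Σ_{i=0}^{d-1} C(t−1,i) ε^i (1−ε)^{t−1−i}. Then E[X] ≥ d/t. -/

import Mathlib

open MeasureTheory intervalIntegral

lemma beta_nat (i j : ℕ) :
    ∫ x in (0:ℝ)..1, x ^ i * (1 - x) ^ j
      = (i.factorial * j.factorial : ℝ) / (i + j + 1).factorial := by
  induction i generalizing j with
  | zero =>
    simp only [pow_zero, one_mul]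
    have := intervalIntegral.integral_comp_sub_left (a := (0:ℝ)) (b := 1) (fun x : ℝ => x ^ j) 1
    simp only [sub_zero, sub_self] at this
    rw [this, integral_pow]
    rw [Nat.factorial_succ]
    push_cast
    field_simp
    simp
  | succ i ih =>
    have key : ∫ x in (0:ℝ)..1,
        ((i+1 : ℝ) * (x ^ i * (1 - x) ^ (j+1)) - (j+1 : ℝ) * (x ^ (i+1) * (1 - x) ^ j)) = 0 := by
      have : ∀ x ∈ Set.uIcc (0:ℝ) 1, HasDerivAt (fun x : ℝ => x ^ (i+1) * (1 - x) ^ (j+1))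
          ((i+1 : ℝ) * (x ^ i * (1 - x) ^ (j+1)) - (j+1 : ℝ) * (x ^ (i+1) * (1 - x) ^ j)) x := by
        intro x _
        have h1 : HasDerivAt (fun x : ℝ => x ^ (i+1)) ((i+1 : ℝ) * x ^ i) x := by
          simpa using hasDerivAt_pow (i+1) x
        have h2 : HasDerivAt (fun x : ℝ => (1 - x) ^ (j+1)) (-((j+1 : ℝ) * (1 - x) ^ j)) x := by
          have := (hasDerivAt_pow (j+1) (1 - x)).comp x ((hasDerivAt_const x (1:ℝ)).sub (hasDerivAt_id x))
          simpa [Function.comp_def] using this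
        have : HasDerivAt (fun y : ℝ => y ^ (i+1) * (1 - y) ^ (j+1)) _ x := h1.mul h2
        convert this using 1
        ring
      rw [integral_eq_sub_of_hasDerivAt this]
      · norm_num
      · apply Continuous.intervalIntegrable; continuity
    have hi1 : IntervalIntegrable (fun x : ℝ => x ^ i * (1 - x) ^ (j+1)) volume 0 1 := by
      apply Continuous.intervalIntegrable; continuity
    have hi2 : IntervalIntegrable (fun x : ℝ => x ^ (i+1) * (1 - x) ^ j) volume 0 1 := by
      apply Continuous.intervalIntegrable; continuity
    rw [integral_sub ((hi1.const_mul _)) ((hi2.const_mul _)), intervalIntegral.integral_const_mul,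
      intervalIntegral.integral_const_mul, ih (j+1), sub_eq_zero] at key
    have hj : ((j:ℝ)+1) ≠ 0 := by positivity
    have heq : ∫ x in (0:ℝ)..1, x ^ (i+1) * (1 - x) ^ j
        = ((i:ℝ)+1) / ((j:ℝ)+1) * ((i.factorial * (j+1).factorial : ℝ) / (i + (j+1) + 1).factorial) := by
      field_simp at key ⊢
      linarith [key]
    rw [heq, Nat.factorial_succ i, Nat.factorial_succ j]
    have : (i + 1 + j + 1) = (i + (j+1) + 1) := by ring
    rw [this]
    push_cast
    field_simp

lemma beta_sum (t d : ℕ) (hd : 1 ≤ d) (htd : d + 1 ≤ t) :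
    ∫ x in (0:ℝ)..1, (∑ i ∈ Finset.range d,
        ((t - 1).choose i : ℝ) * x ^ i * (1 - x) ^ (t - 1 - i)) = (d : ℝ) / t := by
  have hterm : ∀ i ∈ Finset.range d,
      (∫ x in (0:ℝ)..1, ((t - 1).choose i : ℝ) * x ^ i * (1 - x) ^ (t - 1 - i))
        = 1 / (t : ℝ) := by
    intro i hi
    simp only [Finset.mem_range] at hi
    have hit : i ≤ t - 1 := by omega
    have hsum : i + (t - 1 - i) + 1 = t := by omega
    simp only [mul_assoc]
    rw [intervalIntegral.integral_const_mul, beta_nat, hsum]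
    have hkey : ((t-1).choose i) * i.factorial * (t-1-i).factorial = (t-1).factorial :=
      Nat.choose_mul_factorial_mul_factorial hit
    have hfac : t * (t-1).factorial = t.factorial := Nat.mul_factorial_pred (by omega)
    have hkey' : ((t-1).choose i : ℝ) * (i.factorial : ℝ) * ((t-1-i).factorial : ℝ)
        = ((t-1).factorial : ℝ) := by exact_mod_cast congrArg (Nat.cast (R := ℝ)) hkey
    have hfac' : (t : ℝ) * ((t-1).factorial : ℝ) = (t.factorial : ℝ) := by
      exact_mod_cast congrArg (Nat.cast (R := ℝ)) hfac
    have ht0 : (t : ℝ) ≠ 0 := by simp; omega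
    have htf : (t.factorial : ℝ) ≠ 0 := by positivity
    field_simp
    nlinarith [hkey', hfac', (Nat.cast_pos (α := ℝ)).mpr (Nat.factorial_pos (t-1))]
  rw [intervalIntegral.integral_finset_sum]
  · rw [Finset.sum_congr rfl hterm, Finset.sum_const, Finset.card_range]
    simp [div_eq_mul_inv]
  · intro i _
    apply Continuous.intervalIntegrable; continuity

/-- Expectation step of the regret tightness proposition: if a `[0,1]`-valued
random variable `X` has tail `P(X > ε)` lower bounded by the binomial lower tail
`Σ_{i=0}^{d-1} C(t−1,i) ε^i (1−ε)^{t−1−i}` for every `ε ∈ (0,1)`, then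
`E[X] ≥ d/t`. -/
theorem expected_mismatch_ge
    {Ω : Type*} [MeasurableSpace Ω] (P : Measure Ω) [IsProbabilityMeasure P]
    (t d : ℕ) (hd : 1 ≤ d) (htd : d + 1 ≤ t)
    (X : Ω → ℝ) (hX : Measurable X)
    (h0 : ∀ᵐ ω ∂P, 0 ≤ X ω) (h1 : ∀ᵐ ω ∂P, X ω ≤ 1)
    (htail : ∀ ε : ℝ, 0 < ε → ε < 1 →
      (∑ i ∈ Finset.range d,
          ((t - 1).choose i : ℝ) * ε ^ i * (1 - ε) ^ (t - 1 - i)) ≤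
        (P {ω | ε < X ω}).toReal) :
    (d : ℝ) / (t : ℝ) ≤ ∫ ω, X ω ∂P := by
  set F : ℝ → ℝ := fun ε => (P {ω | ε < X ω}).toReal with hF
  set g : ℝ → ℝ := fun x => ∑ i ∈ Finset.range d,
      ((t - 1).choose i : ℝ) * x ^ i * (1 - x) ^ (t - 1 - i) with hg
  have hXint : Integrable X P := by
    refine (integrable_const (1:ℝ)).mono' hX.aestronglyMeasurable ?_
    filter_upwards [h0, h1] with ω a b
    rw [Real.norm_eq_abs, abs_of_nonneg a]; exact b
  have hP1 : P {ω | 1 < X ω} = 0 := by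
    have := ae_iff.mp h1
    simpa [not_le] using this
  have hFzero : ∀ ε : ℝ, 1 ≤ ε → F ε = 0 := by
    intro ε hε
    have : P {ω | ε < X ω} = 0 :=
      le_zero_iff.mp (hP1 ▸ measure_mono fun ω h => lt_of_le_of_lt hε h)
    simp [hF, this]
  have hFmeas : Measurable F := by
    apply Measurable.ennreal_toReal
    exact Antitone.measurable fun _ _ hst => measure_mono fun _ h => lt_of_le_of_lt hst h
  have hFbd : ∀ ε, |F ε| ≤ 1 := by
    intro ε
    rw [abs_of_nonneg ENNReal.toReal_nonneg]
    exact ENNReal.toReal_le_of_le_ofReal one_pos.le (by simpa using prob_le_one)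
  have hFint1 : IntegrableOn F (Set.Ioo 0 1) := by
    refine (integrableOn_const (C := (1:ℝ)) measure_Ioo_lt_top.ne).mono'
      hFmeas.aestronglyMeasurable (Filter.Eventually.of_forall hFbd)
  have hFint2 : IntegrableOn F (Set.Ici 1) := by
    exact (integrableOn_zero).congr_fun (fun ε hε => (hFzero ε hε).symm) measurableSet_Ici
  have hunion : Set.Ioo (0:ℝ) 1 ∪ Set.Ici 1 = Set.Ioi 0 := Set.Ioo_union_Ici_eq_Ioi one_pos
  have hFint : IntegrableOn F (Set.Ioi 0) := hunion ▸ hFint1.union hFint2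
  have layer : ∫ ω, X ω ∂P = ∫ ε in Set.Ioi 0, F ε := hXint.integral_eq_integral_meas_lt h0
  have step1 : ∫ ε in Set.Ioo (0:ℝ) 1, F ε ≤ ∫ ε in Set.Ioi 0, F ε := by
    refine setIntegral_mono_set hFint ?_ ?_
    · exact Filter.Eventually.of_forall fun ε => ENNReal.toReal_nonneg
    · exact (Set.Ioo_subset_Ioi_self).eventuallyLE
  have hgint : IntegrableOn g (Set.Ioo 0 1) := by
    have hgc : Continuous g := by continuity
    rw [← intervalIntegrable_iff_integrableOn_Ioo_of_le one_pos.le]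
    exact hgc.intervalIntegrable 0 1
  have step2 : ∫ ε in Set.Ioo (0:ℝ) 1, g ε ≤ ∫ ε in Set.Ioo (0:ℝ) 1, F ε := by
    refine setIntegral_mono_on hgint hFint1 measurableSet_Ioo ?_
    intro ε hε
    exact htail ε hε.1 hε.2
  have hgval : ∫ ε in Set.Ioo (0:ℝ) 1, g ε = (d : ℝ) / t := by
    rw [← MeasureTheory.integral_Ioc_eq_integral_Ioo, ← intervalIntegral.integral_of_le one_pos.le]
    exact beta_sum t d hd htd
  linarith
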